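/- Let s_U > 0, s_V > 0, ζ ∈ ℝ, and set σ = √(s_U² + s_V²), λ = s_U/s_V, ξ = ζ/(λσ). Then ∫_ℝ ω · (1/σ) Φ(ξ − λω/σ) φ((ω + ζ)/σ) dω = −ζ Φ(ζ/s_U) − s_U φ(ζ/s_U). In words: the partial first moment of the first extended skew-normal component of the closed-form conditional density of the composite error term equals minus the partial mean over (0,∞) of the normal distribution with mean ζ and variance s_U². -/

import Mathlib

open MeasureTheory

/-- The standard normal density. -/
noncomputable def stdNormalPDF (x : ℝ) : ℝ :=
  (Real.sqrt (2 * Real.pi))⁻¹ * Real.exp (-x ^ 2 / 2)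

/-- The standard normal cumulative distribution function. -/
noncomputable def stdNormalCDF (x : ℝ) : ℝ :=
  ∫ t in Set.Iio x, stdNormalPDF t

open Real Set Filter

lemma sqrt2pi_pos : 0 < Real.sqrt (2 * Real.pi) := Real.sqrt_pos.2 (by positivity)

lemma pdf_nonneg (x : ℝ) : 0 ≤ stdNormalPDF x := by
  unfold stdNormalPDF; positivity

lemma pdf_le (x : ℝ) : stdNormalPDF x ≤ (Real.sqrt (2 * Real.pi))⁻¹ := by
  unfold stdNormalPDF
  have h : Real.exp (-x ^ 2 / 2) ≤ 1 := by
    rw [← Real.exp_zero]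
    exact Real.exp_le_exp.2 (by nlinarith [sq_nonneg x])
  nlinarith [inv_pos.2 sqrt2pi_pos, Real.exp_pos (-x ^ 2 / 2)]

lemma pdf_cont : Continuous stdNormalPDF := by
  unfold stdNormalPDF; continuity

lemma pdf_integrable : Integrable stdNormalPDF := by
  have : stdNormalPDF = fun x => (Real.sqrt (2 * Real.pi))⁻¹ * Real.exp (-(1/2) * x ^ 2) := by
    funext x; unfold stdNormalPDF; ring_nf
  rw [this]
  exact (integrable_exp_neg_mul_sq (by norm_num)).const_mul _

lemma pdf_integral : ∫ x, stdNormalPDF x = 1 := by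
  have h : ∫ x : ℝ, Real.exp (-(1/2) * x ^ 2) = Real.sqrt (Real.pi / (1/2)) :=
    integral_gaussian (1/2)
  have h2 : (∫ x, stdNormalPDF x)
      = (Real.sqrt (2 * Real.pi))⁻¹ * ∫ x : ℝ, Real.exp (-(1/2) * x ^ 2) := by
    rw [← integral_const_mul]
    congr 1; funext x; unfold stdNormalPDF; ring_nf
  rw [h2, h]
  rw [show Real.pi / (1/2) = 2 * Real.pi by ring]
  exact inv_mul_cancel₀ (ne_of_gt sqrt2pi_pos)

lemma cdf_nonneg (x : ℝ) : 0 ≤ stdNormalCDF x :=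
  setIntegral_nonneg measurableSet_Iio fun t _ => pdf_nonneg t

lemma cdf_le_one (x : ℝ) : stdNormalCDF x ≤ 1 := by
  rw [← pdf_integral]
  exact setIntegral_le_integral pdf_integrable (Filter.Eventually.of_forall pdf_nonneg)

lemma cdf_eq_indicator (x : ℝ) :
    stdNormalCDF x = ∫ t, (Set.Iio x).indicator stdNormalPDF t := by
  rw [integral_indicator measurableSet_Iio]; rfl

lemma cdf_tendsto_atBot : Tendsto stdNormalCDF atBot (nhds 0) := by
  have h := tendsto_integral_filter_of_dominated_convergence (μ := volume)
    (F := fun (x : ℝ) (t : ℝ) => (Set.Iio x).indicator stdNormalPDF t)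
    (f := fun _ : ℝ => (0:ℝ)) (bound := stdNormalPDF)
    (Filter.Eventually.of_forall fun x =>
      (pdf_cont.stronglyMeasurable.indicator measurableSet_Iio).aestronglyMeasurable)
    (Filter.Eventually.of_forall fun x => Filter.Eventually.of_forall fun t => by
      rw [Real.norm_eq_abs, abs_of_nonneg (Set.indicator_nonneg (fun s _ => pdf_nonneg s) t)]
      exact Set.indicator_le_self' (fun s _ => pdf_nonneg s) t)
    pdf_integrable
    (Filter.Eventually.of_forall fun t => by
      have : ∀ᶠ x : ℝ in atBot, (Set.Iio x).indicator stdNormalPDF t = 0 := by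
        filter_upwards [eventually_le_atBot t] with x hx
        exact Set.indicator_of_notMem (by simpa using hx) _
      exact Tendsto.congr' (this.mono fun x hx => hx.symm) tendsto_const_nhds)
  simp only [integral_zero] at h
  exact Tendsto.congr (fun x => (cdf_eq_indicator x).symm) h

lemma cdf_hasDeriv (x : ℝ) : HasDerivAt stdNormalCDF (stdNormalPDF x) x := by
  have hrep : ∀ y : ℝ, stdNormalCDF y
      = (∫ t in Set.Iic (0:ℝ), stdNormalPDF t) + ∫ t in (0:ℝ)..y, stdNormalPDF t := by
    intro y
    have := intervalIntegral.integral_Iic_sub_Iic (μ := volume) (f := stdNormalPDF)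
      pdf_integrable.integrableOn pdf_integrable.integrableOn (a := 0) (b := y)
    have hIio : stdNormalCDF y = ∫ t in Set.Iic y, stdNormalPDF t :=
      (integral_Iic_eq_integral_Iio).symm
    rw [hIio]; linarith
  have hd : HasDerivAt (fun y => (∫ t in Set.Iic (0:ℝ), stdNormalPDF t)
      + ∫ t in (0:ℝ)..y, stdNormalPDF t) (stdNormalPDF x) x := by
    have := intervalIntegral.integral_hasDerivAt_right
      (pdf_integrable.intervalIntegrable (a := 0) (b := x))
      (pdf_cont.stronglyMeasurable.stronglyMeasurableAtFilter)
      pdf_cont.continuousAt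
    have h' := (hasDerivAt_const x (∫ t in Set.Iic (0:ℝ), stdNormalPDF t)).add this
    rw [zero_add] at h'
    exact h'
  exact hd.congr_of_eventuallyEq (Filter.Eventually.of_forall hrep)

lemma cdf_cont : Continuous stdNormalCDF :=
  continuous_iff_continuousAt.2 fun x => (cdf_hasDeriv x).continuousAt

lemma gauss_prod (a b : ℝ) :
    ∫ x : ℝ, stdNormalPDF (a + b * x) * stdNormalPDF x
      = stdNormalPDF (a / Real.sqrt (1 + b ^ 2)) / Real.sqrt (1 + b ^ 2) := by
  set k : ℝ := 1 + b ^ 2 with hk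
  have hkpos : 0 < k := by positivity
  have hsk : 0 < Real.sqrt k := Real.sqrt_pos.2 hkpos
  set m : ℝ := a * b / k with hm
  have key : ∀ x : ℝ, stdNormalPDF (a + b * x) * stdNormalPDF x
      = ((Real.sqrt (2 * Real.pi))⁻¹ * (Real.sqrt (2 * Real.pi))⁻¹
          * Real.exp (-a ^ 2 / (2 * k))) * Real.exp (-(k / 2) * (x + m) ^ 2) := by
    intro x
    unfold stdNormalPDF
    have h2 : Real.exp (-(a + b * x) ^ 2 / 2) * Real.exp (-x ^ 2 / 2)
        = Real.exp (-a ^ 2 / (2 * k)) * Real.exp (-(k / 2) * (x + m) ^ 2) := by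
      rw [← Real.exp_add, ← Real.exp_add]
      congr 1
      rw [hm]; field_simp; ring
    calc (Real.sqrt (2 * Real.pi))⁻¹ * Real.exp (-(a + b * x) ^ 2 / 2)
          * ((Real.sqrt (2 * Real.pi))⁻¹ * Real.exp (-x ^ 2 / 2))
        = (Real.sqrt (2 * Real.pi))⁻¹ * (Real.sqrt (2 * Real.pi))⁻¹
          * (Real.exp (-(a + b * x) ^ 2 / 2) * Real.exp (-x ^ 2 / 2)) := by ring
      _ = _ := by rw [h2]; ring
  rw [funext key, integral_const_mul]
  have hshift : ∫ x : ℝ, Real.exp (-(k / 2) * (x + m) ^ 2)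
      = ∫ x : ℝ, Real.exp (-(k / 2) * x ^ 2) := by
    exact integral_add_right_eq_self (fun x => Real.exp (-(k / 2) * x ^ 2)) m
  rw [hshift, integral_gaussian]
  have h1 : Real.sqrt (Real.pi / (k / 2)) = Real.sqrt (2 * Real.pi) / Real.sqrt k := by
    rw [show Real.pi / (k / 2) = 2 * Real.pi / k by field_simp [hkpos.ne']]
    exact Real.sqrt_div (by positivity) k
  rw [h1]
  unfold stdNormalPDF
  have h3 : (a / Real.sqrt k) ^ 2 = a ^ 2 / k := by
    rw [div_pow, Real.sq_sqrt hkpos.le]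
  rw [h3, show -(a ^ 2 / k) / 2 = -a ^ 2 / (2 * k) by rw [neg_div, neg_div, div_div, mul_comm]]
  field_simp

lemma cdfmul_integrable (a b : ℝ) :
    Integrable (fun x => stdNormalCDF (a + b * x) * stdNormalPDF x) := by
  refine Integrable.mono pdf_integrable
    ((cdf_cont.comp (by continuity)).mul pdf_cont).aestronglyMeasurable ?_
  filter_upwards with x
  rw [Real.norm_eq_abs, Real.norm_eq_abs,
    abs_of_nonneg (mul_nonneg (cdf_nonneg _) (pdf_nonneg _)), abs_of_nonneg (pdf_nonneg _)]
  exact mul_le_of_le_one_left (pdf_nonneg x) (cdf_le_one _)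

lemma pdfmul_integrable (a b : ℝ) :
    Integrable (fun x => stdNormalPDF (a + b * x) * stdNormalPDF x) := by
  refine Integrable.mono (pdf_integrable.const_mul (Real.sqrt (2 * Real.pi))⁻¹)
    ((pdf_cont.comp (by continuity)).mul pdf_cont).aestronglyMeasurable ?_
  filter_upwards with x
  rw [Real.norm_eq_abs, Real.norm_eq_abs,
    abs_of_nonneg (mul_nonneg (pdf_nonneg _) (pdf_nonneg _)),
    abs_of_nonneg (mul_nonneg (inv_nonneg.2 (Real.sqrt_nonneg _)) (pdf_nonneg _))]
  exact mul_le_mul_of_nonneg_right (pdf_le _) (pdf_nonneg x)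

lemma deriv_step (b : ℝ) (a : ℝ) :
    HasDerivAt (fun a' => ∫ x : ℝ, stdNormalCDF (a' + b * x) * stdNormalPDF x)
      (stdNormalPDF (a / Real.sqrt (1 + b ^ 2)) / Real.sqrt (1 + b ^ 2)) a := by
  have key := hasDerivAt_integral_of_dominated_loc_of_deriv_le (μ := volume)
    (F := fun a' x => stdNormalCDF (a' + b * x) * stdNormalPDF x)
    (F' := fun a' x => stdNormalPDF (a' + b * x) * stdNormalPDF x)
    (x₀ := a) (bound := fun x => (Real.sqrt (2 * Real.pi))⁻¹ * stdNormalPDF x)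
    (s := Metric.ball a 1) (Metric.ball_mem_nhds a one_pos)
    (Filter.Eventually.of_forall fun a' =>
      ((cdf_cont.comp (by continuity)).mul pdf_cont).aestronglyMeasurable)
    (cdfmul_integrable a b)
    ((pdf_cont.comp (by continuity)).mul pdf_cont).aestronglyMeasurable
    (Filter.Eventually.of_forall fun x => fun a' _ => by
      rw [Real.norm_eq_abs, abs_of_nonneg (mul_nonneg (pdf_nonneg _) (pdf_nonneg _))]
      exact mul_le_mul_of_nonneg_right (pdf_le _) (pdf_nonneg x))
    (pdf_integrable.const_mul _)
    (Filter.Eventually.of_forall fun x => fun a' _ => by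
      have h1 : HasDerivAt (fun a'' : ℝ => a'' + b * x) 1 a' :=
        (hasDerivAt_id a').add_const (b * x)
      have h2 := ((cdf_hasDeriv (a' + b * x)).comp a' h1).mul_const (stdNormalPDF x)
      simpa using h2)
  have h := key.2
  rwa [gauss_prod a b] at h

lemma cdfphi_integral (a b : ℝ) :
    ∫ x : ℝ, stdNormalCDF (a + b * x) * stdNormalPDF x
      = stdNormalCDF (a / Real.sqrt (1 + b ^ 2)) := by
  set c : ℝ := Real.sqrt (1 + b ^ 2) with hc
  have hcpos : 0 < c := Real.sqrt_pos.2 (by positivity)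
  set D : ℝ → ℝ := fun a' =>
    (∫ x : ℝ, stdNormalCDF (a' + b * x) * stdNormalPDF x) - stdNormalCDF (a' / c) with hD
  have hDd : ∀ a', HasDerivAt D 0 a' := by
    intro a'
    have hG : HasDerivAt (fun a'' => stdNormalCDF (a'' / c))
        (stdNormalPDF (a' / c) / c) a' := by
      have h1 : HasDerivAt (fun a'' : ℝ => a'' / c) (1 / c) a' := by
        simpa using (hasDerivAt_id a').div_const c
      have := (cdf_hasDeriv (a' / c)).comp a' h1
      simp [div_eq_mul_inv, mul_comm] at this ⊢
      exact this
    exact ((deriv_step b a').sub hG).congr_deriv (sub_self _)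
  have hconst : ∀ a', D a' = D a := fun a' =>
    is_const_of_deriv_eq_zero (fun x => (hDd x).differentiableAt)
      (fun x => (hDd x).deriv) a' a
  -- D tends to 0 at -infty
  have hF0 : Tendsto (fun a' => ∫ x : ℝ, stdNormalCDF (a' + b * x) * stdNormalPDF x)
      atBot (nhds 0) := by
    have := tendsto_integral_filter_of_dominated_convergence (μ := volume)
      (F := fun (a' : ℝ) (x : ℝ) => stdNormalCDF (a' + b * x) * stdNormalPDF x)
      (f := fun _ : ℝ => (0:ℝ)) (bound := stdNormalPDF)
      (Filter.Eventually.of_forall fun a' =>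
        ((cdf_cont.comp (by continuity)).mul pdf_cont).aestronglyMeasurable)
      (Filter.Eventually.of_forall fun a' => Filter.Eventually.of_forall fun x => by
        rw [Real.norm_eq_abs, abs_of_nonneg (mul_nonneg (cdf_nonneg _) (pdf_nonneg _))]
        exact mul_le_of_le_one_left (pdf_nonneg x) (cdf_le_one _))
      pdf_integrable
      (Filter.Eventually.of_forall fun x => by
        have h1 : Tendsto (fun a' : ℝ => a' + b * x) atBot atBot :=
          tendsto_atBot_add_const_right _ _ tendsto_id
        have h2 := (cdf_tendsto_atBot.comp h1).mul_const (stdNormalPDF x)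
        simpa using h2)
    simpa using this
  have hG0 : Tendsto (fun a' => stdNormalCDF (a' / c)) atBot (nhds 0) :=
    cdf_tendsto_atBot.comp (tendsto_id.atBot_div_const hcpos)
  have hD0 : Tendsto D atBot (nhds 0) := by simpa [hD] using hF0.sub hG0
  have : D a = 0 := by
    have h1 : Tendsto D atBot (nhds (D a)) := by
      rw [show D = fun _ => D a from funext hconst]; exact tendsto_const_nhds
    exact tendsto_nhds_unique h1 hD0
  have := sub_eq_zero.1 this
  exact this

lemma pdf_hasDeriv (x : ℝ) : HasDerivAt stdNormalPDF (-x * stdNormalPDF x) x := by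
  have h1 : HasDerivAt (fun y : ℝ => -y ^ 2 / 2) (-x) x := by
    have := ((hasDerivAt_pow 2 x).neg).div_const 2
    simpa using this.congr_deriv (by ring)
  have h2 := (Real.hasDerivAt_exp (-x ^ 2 / 2)).comp x h1
  have h3 := h2.const_mul (Real.sqrt (2 * Real.pi))⁻¹
  unfold stdNormalPDF
  exact h3.congr_deriv (by ring)

lemma cdf_abs_le (y : ℝ) : |stdNormalCDF y| ≤ 1 :=
  abs_le.2 ⟨by linarith [cdf_nonneg y], cdf_le_one y⟩

lemma pdf_tendsto_atTop : Tendsto stdNormalPDF atTop (nhds 0) := by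
  have h1 : Tendsto (fun x : ℝ => -x ^ 2 / 2) atTop atBot := by
    apply Tendsto.atBot_div_const (by norm_num : (0:ℝ) < 2)
    exact tendsto_neg_atTop_atBot.comp (tendsto_pow_atTop (by norm_num : 2 ≠ 0))
  have h2 := (Real.tendsto_exp_atBot.comp h1).const_mul (Real.sqrt (2 * Real.pi))⁻¹
  rw [mul_zero] at h2
  exact h2.congr fun x => rfl

lemma pdf_tendsto_atBot : Tendsto stdNormalPDF atBot (nhds 0) := by
  have h := pdf_tendsto_atTop.comp tendsto_neg_atBot_atTop
  refine h.congr fun x => ?_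
  show stdNormalPDF (-x) = stdNormalPDF x
  unfold stdNormalPDF
  rw [neg_pow]
  norm_num

lemma xpdf_integrable : Integrable (fun x => x * stdNormalPDF x) := by
  have h := (integrable_mul_exp_neg_mul_sq (by norm_num : (0:ℝ) < 1/2)).const_mul
    (Real.sqrt (2 * Real.pi))⁻¹
  refine h.congr (Filter.Eventually.of_forall fun x => ?_)
  unfold stdNormalPDF; ring_nf

lemma xmul_integrable (a b : ℝ) :
    Integrable (fun x => x * (stdNormalCDF (a + b * x) * stdNormalPDF x)) := by
  refine Integrable.mono xpdf_integrable
    (continuous_id.mul ((cdf_cont.comp (by continuity)).mul pdf_cont)).aestronglyMeasurable ?_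
  filter_upwards with x
  rw [Real.norm_eq_abs, Real.norm_eq_abs, abs_mul, abs_mul, abs_mul]
  exact mul_le_mul_of_nonneg_left
    (mul_le_of_le_one_left (abs_nonneg _) (cdf_abs_le _)) (abs_nonneg x)

lemma parts (a b : ℝ) :
    ∫ x : ℝ, x * (stdNormalCDF (a + b * x) * stdNormalPDF x)
      = b * (stdNormalPDF (a / Real.sqrt (1 + b ^ 2)) / Real.sqrt (1 + b ^ 2)) := by
  set g : ℝ → ℝ := fun x => stdNormalPDF x * stdNormalCDF (a + b * x) with hgdef
  set g' : ℝ → ℝ := fun x =>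
    -x * stdNormalPDF x * stdNormalCDF (a + b * x)
      + stdNormalPDF x * (stdNormalPDF (a + b * x) * b) with hg'def
  have hg : ∀ x, HasDerivAt g (g' x) x := by
    intro x
    have h1 : HasDerivAt (fun y : ℝ => stdNormalCDF (a + b * y))
        (stdNormalPDF (a + b * x) * b) x := by
      have hl : HasDerivAt (fun y : ℝ => a + b * y) b x := by
        simpa using ((hasDerivAt_id x).const_mul b).const_add a
      exact (cdf_hasDeriv (a + b * x)).comp x hl
    exact (pdf_hasDeriv x).mul h1
  have hgbd : ∀ x, |g x| ≤ stdNormalPDF x := by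
    intro x
    rw [abs_of_nonneg (mul_nonneg (pdf_nonneg _) (cdf_nonneg _))]
    exact mul_le_of_le_one_right (pdf_nonneg x) (cdf_le_one _)
  have hgTop : Tendsto g atTop (nhds 0) := by
    apply squeeze_zero_norm hgbd
    · exact pdf_tendsto_atTop
  have hgBot : Tendsto g atBot (nhds 0) := squeeze_zero_norm hgbd pdf_tendsto_atBot
  have hterm1 : Integrable (fun x => -x * stdNormalPDF x * stdNormalCDF (a + b * x)) := by
    refine Integrable.mono xpdf_integrable
      (((continuous_id.neg.mul pdf_cont).mul (cdf_cont.comp (by continuity)))).aestronglyMeasurable ?_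
    filter_upwards with x
    rw [Real.norm_eq_abs, Real.norm_eq_abs, abs_mul, abs_mul, abs_neg, abs_mul]
    exact mul_le_of_le_one_right (mul_nonneg (abs_nonneg _) (abs_nonneg _)) (cdf_abs_le _)
  have hterm2 : Integrable (fun x => stdNormalPDF x * (stdNormalPDF (a + b * x) * b)) := by
    have := (pdfmul_integrable a b).const_mul b
    refine this.congr (Filter.Eventually.of_forall fun x => ?_)
    ring
  have hg'int : Integrable g' := hterm1.add hterm2
  have hIic : ∫ x in Set.Iic (0:ℝ), g' x = g 0 - 0 :=
    integral_Iic_of_hasDerivAt_of_tendsto' (fun x _ => hg x) hg'int.integrableOn hgBot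
  have hIoi : ∫ x in Set.Ioi (0:ℝ), g' x = 0 - g 0 :=
    integral_Ioi_of_hasDerivAt_of_tendsto' (fun x _ => hg x) hg'int.integrableOn hgTop
  have hzero : ∫ x : ℝ, g' x = 0 := by
    rw [← integral_add_compl (measurableSet_Iic (a := (0:ℝ))) hg'int]
    rw [compl_Iic, hIic, hIoi]
    ring
  have hsplit : ∫ x : ℝ, g' x
      = (∫ x : ℝ, -x * stdNormalPDF x * stdNormalCDF (a + b * x))
        + ∫ x : ℝ, stdNormalPDF x * (stdNormalPDF (a + b * x) * b) :=
    integral_add hterm1 hterm2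
  have h2 : ∫ x : ℝ, stdNormalPDF x * (stdNormalPDF (a + b * x) * b)
      = b * (stdNormalPDF (a / Real.sqrt (1 + b ^ 2)) / Real.sqrt (1 + b ^ 2)) := by
    rw [← gauss_prod a b, ← integral_const_mul]
    congr 1; funext x; ring
  have h1 : ∫ x : ℝ, -x * stdNormalPDF x * stdNormalCDF (a + b * x)
      = -∫ x : ℝ, x * (stdNormalCDF (a + b * x) * stdNormalPDF x) := by
    rw [← integral_neg]
    congr 1; funext x; ring
  rw [hsplit, h1, h2] at hzero
  linarith

/-- the partial first moment of the first extended skew-normal component of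
the closed-form conditional density of the composite error term. -/
theorem partial_first_moment_esn
    (sU sV ζ : ℝ) (hU : 0 < sU) (hV : 0 < sV)
    (σ : ℝ) (hσ : σ = Real.sqrt (sU ^ 2 + sV ^ 2))
    (lam : ℝ) (hlam : lam = sU / sV)
    (ξ : ℝ) (hξ : ξ = ζ / (lam * σ)) :
    (∫ ω : ℝ, ω * ((1 / σ) * stdNormalCDF (ξ - lam * ω / σ) * stdNormalPDF ((ω + ζ) / σ))) =
      -(ζ * stdNormalCDF (ζ / sU)) - sU * stdNormalPDF (ζ / sU) := by
  have hσpos : 0 < σ := hσ ▸ Real.sqrt_pos.2 (by positivity)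
  have hσ2 : σ ^ 2 = sU ^ 2 + sV ^ 2 := by
    rw [hσ]; exact Real.sq_sqrt (by positivity)
  have hlampos : 0 < lam := hlam ▸ div_pos hU hV
  set c₀ : ℝ := ξ + lam * ζ / σ with hc0
  set h : ℝ → ℝ := fun x =>
    (σ * x - ζ) * ((1 / σ) * stdNormalCDF (c₀ + -lam * x) * stdNormalPDF x) with hh
  -- step 1: rewrite integrand as h ((ω + ζ)/σ)
  have hrw : (fun ω : ℝ => ω * ((1 / σ) * stdNormalCDF (ξ - lam * ω / σ)
      * stdNormalPDF ((ω + ζ) / σ))) = fun ω => h ((ω + ζ) / σ) := by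
    funext ω
    simp only [hh]
    have e1 : σ * ((ω + ζ) / σ) - ζ = ω := by field_simp; ring
    have e2 : c₀ + -lam * ((ω + ζ) / σ) = ξ - lam * ω / σ := by
      rw [hc0]; field_simp; ring
    rw [e1, e2]
  rw [hrw]
  -- step 2: change of variables
  have hcov : (∫ ω : ℝ, h ((ω + ζ) / σ)) = σ * ∫ x, h x := by
    have h1 : (∫ ω : ℝ, h ((ω + ζ) / σ)) = ∫ u : ℝ, h (u / σ) := by
      exact integral_add_right_eq_self (fun u => h (u / σ)) ζ
    rw [h1, MeasureTheory.Measure.integral_comp_div h σ,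
      abs_of_pos hσpos, smul_eq_mul]
  rw [hcov]
  -- step 3: expand h and integrate
  have hsplit : (∫ x, h x)
      = (∫ x : ℝ, x * (stdNormalCDF (c₀ + -lam * x) * stdNormalPDF x))
        - (ζ / σ) * ∫ x : ℝ, stdNormalCDF (c₀ + -lam * x) * stdNormalPDF x := by
    rw [← integral_const_mul, ← integral_sub (xmul_integrable c₀ (-lam))
      (((cdfmul_integrable c₀ (-lam))).const_mul (ζ / σ))]
    congr 1; funext x
    rw [hh]
    field_simp
  rw [hsplit, parts, cdfphi_integral]
  -- step 4: arithmetic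
  have hcc : Real.sqrt (1 + (-lam) ^ 2) = σ / sV := by
    rw [neg_pow]
    norm_num
    rw [show 1 + lam ^ 2 = (σ / sV) ^ 2 by
      rw [hlam, div_pow, div_pow, hσ2]; field_simp; ring]
    exact Real.sqrt_sq (le_of_lt (div_pos hσpos hV))
  rw [hcc]
  have hr : c₀ / (σ / sV) = ζ / sU := by
    rw [hc0, hξ, hlam]
    field_simp
    linear_combination (-ζ) * hσ2
  rw [hr]
  have hfin : σ * (-lam * (stdNormalPDF (ζ / sU) / (σ / sV))
      - ζ / σ * stdNormalCDF (ζ / sU))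
      = -(ζ * stdNormalCDF (ζ / sU)) - sU * stdNormalPDF (ζ / sU) := by
    rw [hlam]
    field_simp
    ring
  exact hfin
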